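/- Let s > 1 and 0 < r₀ < 1. Then there exist N = N(r₀) > 1 and C = C(s, r₀) > 0 such that for every a ∈ 𝔻 with 1 − |a| < 1/(2N), setting t_N = 1 − N(1−|a|), for every z ∈ Δ(a, r₀) and every w ∈ 𝔻 one has |(1−āz)^{−s} − (1−āw)^{−s}| + |(1−t_N āz)^{−s} − (1−t_N āw)^{−s}| ≥ C ρ(z,w) |1−āz|^{−s}, where for ξ ∈ ℂ with Re ξ > 0, ξ^{−s} denotes the principal branch exp(−s Log ξ). -/

import Mathlib

open MeasureTheory Set Complex Filter
open scoped ENNReal Real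

noncomputable section

/-- The open unit disk in `ℂ`. -/
def uDisk : Set ℂ := {z : ℂ | ‖z‖ < 1}

/-- Area measure on `ℂ`, normalized so that the unit disk has measure `1`. -/
def volA : Measure ℂ := (ENNReal.ofReal Real.pi)⁻¹ • volume

/-- Pseudo-hyperbolic distance `ρ(z,w) = |z - w| / |1 - w̄ z|`. -/
def pd (z w : ℂ) : ℝ := ‖(z - w)‖ / ‖(1 - (starRingEnd ℂ) w * z)‖

/-- Pseudo-hyperbolic disk `Δ(a,t)`. -/
def pDisk (a : ℂ) (t : ℝ) : Set ℂ := {z | z ∈ uDisk ∧ pd z a < t}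

/-- The weighted Bergman measure `dA_α = (α+1)(1-|z|²)^α dA` on the unit disk. -/
def bergMeasure (α : ℝ) : Measure ℂ :=
  (volA.restrict uDisk).withDensity fun z =>
    ENNReal.ofReal ((α + 1) * (1 - ‖z‖ ^ 2) ^ α)

/-- The joint pull-back measure `μ` induced by `φ` and `ψ`:
`μ(E) = ∫_{φ⁻¹E} ρ(z)^q dA_α + ∫_{ψ⁻¹E} ρ(z)^q dA_α` where `ρ(z) = ρ(φ z, ψ z)`. -/
def jointMu (q α : ℝ) (φ ψ : ℂ → ℂ) : Measure ℂ :=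
  Measure.map φ ((bergMeasure α).withDensity fun z => ENNReal.ofReal (pd (φ z) (ψ z) ^ q))
  + Measure.map ψ ((bergMeasure α).withDensity fun z => ENNReal.ofReal (pd (φ z) (ψ z) ^ q))

/-- The Hardy space (quasi-)norm `‖f‖_{H^p}`. -/
def hardyNorm (p : ℝ) (f : ℂ → ℂ) : ℝ≥0∞ :=
  (⨆ r : Ioo (0:ℝ) 1,
      (ENNReal.ofReal (2 * Real.pi))⁻¹ *
        ∫⁻ θ in Ioc (0:ℝ) (2 * Real.pi),
          ENNReal.ofReal
            (‖(f (((r : ℝ) : ℂ) * Complex.exp ((θ : ℂ) * Complex.I)))‖ ^ p)) ^ (1 / p)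

/-- The weighted Bergman space (quasi-)norm `‖f‖_{A^q_α}`. -/
def bergNorm (q α : ℝ) (f : ℂ → ℂ) : ℝ≥0∞ :=
  (∫⁻ z, ENNReal.ofReal (‖(f z)‖ ^ q) ∂bergMeasure α) ^ (1 / q)

/-- The difference of composition-differentiation operators, `(D_φ - D_ψ) f = f'∘φ - f'∘ψ`. -/
def diffOp (φ ψ f : ℂ → ℂ) : ℂ → ℂ := fun z => deriv f (φ z) - deriv f (ψ z)

/-- Boundedness of `D_φ - D_ψ : H^p → A^q_α`. -/
def DBounded (p q α : ℝ) (φ ψ : ℂ → ℂ) : Prop :=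
  ∃ C > 0, ∀ f : ℂ → ℂ, DifferentiableOn ℂ f uDisk → hardyNorm p f < ⊤ →
    bergNorm q α (diffOp φ ψ f) ≤ ENNReal.ofReal C * hardyNorm p f

/-- Compactness of `D_φ - D_ψ : H^p → A^q_α`. -/
def DCompact (p q α : ℝ) (φ ψ : ℂ → ℂ) : Prop :=
  ∀ f : ℕ → ℂ → ℂ, (∀ n, DifferentiableOn ℂ (f n) uDisk) →
    (∀ n, hardyNorm p (f n) ≤ 1) →
    (∀ K, K ⊆ uDisk → IsCompact K → TendstoUniformlyOn f (fun _ => (0:ℂ)) atTop K) →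
    Tendsto (fun n => bergNorm q α (diffOp φ ψ (f n))) atTop (nhds 0)

/-- The Koranyi approach region `Γ(ζ)`. -/
def koranyi (ζ : ℂ) : Set ℂ :=
  {z | z ∈ uDisk ∧ ‖(1 - (starRingEnd ℂ) ζ * z)‖ < 1 - ‖z‖ ^ 2}

/-- The Carleson region `Q_t(ζ)`. -/
def cBox (ζ : ℂ) (t : ℝ) : Set ℂ :=
  {z | z ∈ uDisk ∧ ‖(1 - (starRingEnd ℂ) ζ * z)‖ < t}

/-- The operator (quasi-)norm of `D_φ - D_ψ : H^p → A^q_α`: the least constant `C ≥ 0`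
with `‖(D_φ - D_ψ) f‖_{A^q_α} ≤ C ‖f‖_{H^p}` for all `f ∈ H^p`. -/
def opNorm (p q α : ℝ) (φ ψ : ℂ → ℂ) : ℝ≥0∞ :=
  sInf {C : ℝ≥0∞ | ∀ f : ℂ → ℂ, DifferentiableOn ℂ f uDisk → hardyNorm p f < ⊤ →
    bergNorm q α (diffOp φ ψ f) ≤ C * hardyNorm p f}


set_option maxHeartbeats 1000000

namespace Stmt13

lemma abs_cpow_real' {v : ℂ} (hv : v ≠ 0) (r : ℝ) :
    ‖(v ^ ((r : ℝ) : ℂ))‖ = ‖v‖ ^ r := by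
  rw [Complex.norm_cpow_of_ne_zero hv]; simp

lemma exp_diff {A B : ℂ} (h : ‖(A - B)‖ ≤ 1) :
    ‖(Complex.exp A - Complex.exp B)‖
      ≤ ‖(Complex.exp B)‖ * (2 * ‖(A - B)‖) := by
  have e : Complex.exp A - Complex.exp B = Complex.exp B * (Complex.exp (A - B) - 1) := by
    rw [mul_sub, mul_one, ← Complex.exp_add]; ring_nf
  rw [e, norm_mul]
  exact mul_le_mul_of_nonneg_left (Complex.norm_exp_sub_one_le h) (norm_nonneg _)

lemma log_diff {r : ℝ} (hr : 0 < r) {u v : ℂ} (hu : r ≤ u.re) (hv : r ≤ v.re) :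
    ‖(Complex.log u - Complex.log v)‖ ≤ ‖(u - v)‖ / r := by
  have hconv : Convex ℝ {z : ℂ | r ≤ z.re} := convex_halfSpace_re_ge r
  have key := hconv.norm_image_sub_le_of_norm_hasDerivWithin_le
    (f := Complex.log) (f' := fun z => z⁻¹) (C := r⁻¹)
    (fun z hz => (Complex.hasDerivAt_log (Or.inl (lt_of_lt_of_le hr hz))).hasDerivWithinAt)
    (fun z hz => by
      rw [norm_inv]
      exact inv_anti₀ hr (le_trans hz (Complex.re_le_norm z))) hv hu
  rw [div_eq_inv_mul]
  simpa using key

lemma mvt' {f f' : ℂ → ℂ} {s : Set ℂ} {C : ℝ} (hs : Convex ℝ s)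
    (hf : ∀ x ∈ s, HasDerivWithinAt f (f' x) s x) {φ : ℂ}
    (bound : ∀ x ∈ s, ‖(f' x - φ)‖ ≤ C) {x y : ℂ} (xs : x ∈ s) (ys : y ∈ s) :
    ‖(f y - f x - (y - x) * φ)‖ ≤ C * ‖(y - x)‖ := by
  have key := hs.norm_image_sub_le_of_norm_hasFDerivWithin_le'
    (f := f) (f' := fun x => ContinuousLinearMap.smulRight (1 : ℂ →L[ℂ] ℂ) (f' x))
    (φ := ContinuousLinearMap.smulRight (1 : ℂ →L[ℂ] ℂ) φ) (C := C)
    (fun x hx => (hf x hx).hasFDerivWithinAt)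
    (fun x hx => by
      have e : ContinuousLinearMap.smulRight (1 : ℂ →L[ℂ] ℂ) (f' x)
          - ContinuousLinearMap.smulRight (1 : ℂ →L[ℂ] ℂ) φ
          = ContinuousLinearMap.smulRight (1 : ℂ →L[ℂ] ℂ) (f' x - φ) := by
        ext1; simp [smul_sub]
      rw [e, ContinuousLinearMap.norm_smulRight_apply]
      simpa using bound x hx) xs ys
  simpa [smul_eq_mul, mul_comm] using key

lemma case1 (s : ℝ) (hs : 1 < s) {x y : ℂ} (hx : x ≠ 0) (hy : y ≠ 0)
    (h : 2 * ‖x‖ ≤ ‖y‖) :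
    1 / 2 * ‖x‖ ^ (-s) ≤ ‖(x ^ (-(s : ℂ)) - y ^ (-(s : ℂ)))‖ := by
  have hax : 0 < ‖x‖ := norm_pos_iff.mpr hx
  have hexp : (-(s : ℂ)) = (((-s : ℝ)) : ℂ) := by push_cast; ring
  have h1 : ‖(x ^ (-(s : ℂ)))‖ = ‖x‖ ^ (-s) := by
    rw [hexp, abs_cpow_real' hx]
  have h2 : ‖(y ^ (-(s : ℂ)))‖ = ‖y‖ ^ (-s) := by
    rw [hexp, abs_cpow_real' hy]
  have h3 : ‖y‖ ^ (-s) ≤ 1 / 2 * ‖x‖ ^ (-s) := by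
    have e1 : ‖y‖ ^ (-s) ≤ (2 * ‖x‖) ^ (-s) :=
      Real.rpow_le_rpow_of_nonpos (by positivity) h (by linarith)
    have e2 : (2 * ‖x‖) ^ (-s) = (2:ℝ) ^ (-s) * ‖x‖ ^ (-s) :=
      Real.mul_rpow (by norm_num) hax.le
    have e3 : (2:ℝ) ^ (-s) ≤ 1 / 2 := by
      calc (2:ℝ) ^ (-s) ≤ (2:ℝ) ^ (-(1:ℝ)) :=
            Real.rpow_le_rpow_of_exponent_le (by norm_num) (by linarith)
        _ = 1 / 2 := by
            rw [Real.rpow_neg (by norm_num), Real.rpow_one]; norm_num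
    have e5 : 0 < ‖x‖ ^ (-s) := Real.rpow_pos_of_pos hax _
    have e6 : (2:ℝ) ^ (-s) * ‖x‖ ^ (-s) ≤ 1 / 2 * ‖x‖ ^ (-s) :=
      mul_le_mul_of_nonneg_right e3 e5.le
    linarith
  have h4 : ‖(x ^ (-(s : ℂ)))‖ - ‖(y ^ (-(s : ℂ)))‖
      ≤ ‖(x ^ (-(s : ℂ)) - y ^ (-(s : ℂ)))‖ := by
    have := norm_sub_norm_le (x ^ (-(s : ℂ))) (y ^ (-(s : ℂ)))
    simpa using this
  rw [h1, h2] at h4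
  linarith

lemma key (s B d t N : ℝ) (hs : 1 < s) (hB : 4 ≤ B) (hN : N = 10 * (s + 1) * B)
    (hd : 0 < d) (ht : 1 / 2 ≤ t) (ht1 : t ≤ 1) (x y : ℂ)
    (hx : d ≤ x.re) (hy : d ≤ y.re) (hxB : ‖x‖ ≤ B * d) (hyB : ‖y‖ ≤ B * d) :
    s / 4 * ((N + B) * d) ^ (-(s + 1)) * ‖(x - y)‖ ≤
      ‖((((N * d : ℝ) : ℂ) + ((t : ℝ) : ℂ) * x) ^ (-(s : ℂ)) -
        (((N * d : ℝ) : ℂ) + ((t : ℝ) : ℂ) * y) ^ (-(s : ℂ)))‖ := by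
  have hsB : (2:ℝ) * 4 ≤ (s + 1) * B :=
    mul_le_mul (by linarith) hB (by norm_num) (by linarith)
  have hN80 : 80 ≤ N := by rw [hN]; linarith
  have hNpos : (0:ℝ) < N := by linarith
  have hNd : 0 < N * d := mul_pos hNpos hd
  have ht0 : 0 < t := by linarith
  set S : Set ℂ := {z : ℂ | d ≤ z.re} ∩ Metric.closedBall 0 (B * d) with hSdef
  have hconv : Convex ℝ S := (convex_halfSpace_re_ge d).inter (convex_closedBall 0 (B * d))
  have hxS : x ∈ S := ⟨hx, by simpa [Complex.dist_eq] using hxB⟩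
  have hyS : y ∈ S := ⟨hy, by simpa [Complex.dist_eq] using hyB⟩
  set u : ℂ → ℂ := fun l => ((N * d : ℝ) : ℂ) + ((t : ℝ) : ℂ) * l with hudef
  have hure : ∀ l : ℂ, l ∈ S → N * d ≤ (u l).re := by
    intro l hl
    have h1 : d ≤ l.re := hl.1
    have e : (u l).re = N * d + t * l.re := by simp [hudef]
    rw [e]
    nlinarith
  have hu0 : ∀ l : ℂ, l ∈ S → (u l) ≠ 0 := by
    intro l hl h0
    have h1 := hure l hl
    rw [h0] at h1
    simp at h1
    nlinarith
  have huabs : ∀ l : ℂ, l ∈ S → ‖(u l)‖ ≤ (N + B) * d := by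
    intro l hl
    have h1 : ‖(u l)‖ ≤ N * d + t * ‖l‖ := by
      calc ‖(u l)‖ ≤ ‖((N * d : ℝ) : ℂ)‖ + ‖(((t:ℝ):ℂ) * l)‖ :=
            norm_add_le _ _
        _ = N * d + t * ‖l‖ := by
            rw [norm_mul, Complex.norm_real, Real.norm_eq_abs, Complex.norm_real, Real.norm_eq_abs, abs_of_pos hNd, abs_of_pos ht0]
    have h2 : ‖l‖ ≤ B * d := by simpa [Complex.dist_eq] using hl.2
    nlinarith [norm_nonneg l]
  set G : ℂ → ℂ := fun l => (u l) ^ (-(s : ℂ)) with hGdef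
  set G' : ℂ → ℂ := fun l => (-(s : ℂ)) * (u l) ^ (-(s : ℂ) - 1) * ((t : ℝ) : ℂ) with hG'def
  have hderiv : ∀ l ∈ S, HasDerivWithinAt G (G' l) S l := by
    intro l hl
    have h1 : HasDerivWithinAt u (((t : ℝ) : ℂ)) S l := by
      have := (((hasDerivAt_id l).const_mul (((t : ℝ)) : ℂ)).const_add
        (((N * d : ℝ)) : ℂ)).hasDerivWithinAt (s := S)
      simpa [hudef] using this
    have hsl : u l ∈ Complex.slitPlane := by
      apply Complex.mem_slitPlane_iff.mpr
      left
      exact lt_of_lt_of_le hNd (hure l hl)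
    exact h1.cpow_const (c := -(s : ℂ)) hsl
  have hcast : (-(s : ℂ) - 1) = (((-(s + 1) : ℝ)) : ℂ) := by push_cast; ring
  have habs_c : ‖(-(s : ℂ) - 1)‖ = s + 1 := by
    rw [hcast, Complex.norm_real, Real.norm_eq_abs, abs_of_neg (by linarith)]
    ring
  have habs_s : ‖(-(s : ℂ))‖ = s := by
    have e : (-(s : ℂ)) = (((-s : ℝ)) : ℂ) := by push_cast; ring
    rw [e, Complex.norm_real, Real.norm_eq_abs, abs_of_neg (by linarith)]
    ring
  have hcdiff : ∀ l ∈ S, ‖((u l) ^ (-(s : ℂ) - 1) - (u y) ^ (-(s : ℂ) - 1))‖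
      ≤ 1 / 2 * ‖((u y) ^ (-(s : ℂ) - 1))‖ := by
    intro l hl
    have hul := hu0 l hl
    have huy := hu0 y hyS
    have hlog : ‖(Complex.log (u l) - Complex.log (u y))‖
        ≤ ‖(u l - u y)‖ / (N * d) := log_diff hNd (hure l hl) (hure y hyS)
    have hulv : ‖(u l - u y)‖ ≤ 2 * B * d := by
      have e : u l - u y = ((t : ℝ) : ℂ) * (l - y) := by simp [hudef]; ring
      rw [e, norm_mul, Complex.norm_real, Real.norm_eq_abs, abs_of_pos ht0]
      have h2 : ‖l‖ ≤ B * d := by simpa [Complex.dist_eq] using hl.2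
      have h3 : ‖(l - y)‖ ≤ ‖l‖ + ‖y‖ := by
        have := norm_sub_le l y
        simpa using this
      nlinarith [norm_nonneg (l - y)]
    have h4 : ‖(u l - u y)‖ / (N * d) ≤ 2 * B / N := by
      have e1 : 2 * B / N = (2 * B * d) / (N * d) := by
        rw [div_eq_div_iff hNpos.ne' hNd.ne']
        ring
      rw [e1]
      gcongr
    have hB0 : B ≠ 0 := by linarith
    have hs1 : s + 1 ≠ 0 := by linarith
    have h5 : (s + 1) * (2 * B / N) = 1 / 5 := by
      rw [hN]
      field_simp
      ring
    have hABle : ‖(Complex.log (u l) * (-(s:ℂ) - 1)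
        - Complex.log (u y) * (-(s:ℂ) - 1))‖ ≤ 1 / 5 := by
      rw [← sub_mul, norm_mul, habs_c]
      have h6 : ‖(Complex.log (u l) - Complex.log (u y))‖ * (s + 1)
          ≤ (2 * B / N) * (s + 1) :=
        mul_le_mul_of_nonneg_right (le_trans hlog h4) (by linarith)
      linarith [h5, h6, mul_comm (2 * B / N) (s + 1)]
    rw [Complex.cpow_def_of_ne_zero hul, Complex.cpow_def_of_ne_zero huy]
    have hED := exp_diff (A := Complex.log (u l) * (-(s:ℂ) - 1))
      (B := Complex.log (u y) * (-(s:ℂ) - 1)) (by linarith)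
    have hnn : 0 ≤ ‖(Complex.exp (Complex.log (u y) * (-(s:ℂ) - 1)))‖ :=
      norm_nonneg _
    nlinarith [hED, hABle, hnn]
  set V : ℝ := ‖((u y) ^ (-(s : ℂ) - 1))‖ with hVdef
  have hbound : ∀ l ∈ S, ‖(G' l - G' y)‖ ≤ s * t / 2 * V := by
    intro l hl
    have e : G' l - G' y
        = (-(s : ℂ)) * ((u l) ^ (-(s : ℂ) - 1) - (u y) ^ (-(s : ℂ) - 1)) * ((t : ℝ) : ℂ) := by
      simp only [hG'def]
      ring
    have habs_t : ‖(((t : ℝ)) : ℂ)‖ = t := by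
      rw [Complex.norm_real, Real.norm_eq_abs, abs_of_pos ht0]
    rw [e, norm_mul, norm_mul, habs_s, habs_t]
    have h7 := hcdiff l hl
    have h8 : s * ‖((u l) ^ (-(s : ℂ) - 1) - (u y) ^ (-(s : ℂ) - 1))‖ * t
        ≤ s * (1 / 2 * V) * t := by
      apply mul_le_mul_of_nonneg_right _ ht0.le
      exact mul_le_mul_of_nonneg_left h7 (by linarith)
    calc s * ‖((u l) ^ (-(s : ℂ) - 1) - (u y) ^ (-(s : ℂ) - 1))‖ * t
        ≤ s * (1 / 2 * V) * t := h8
      _ = s * t / 2 * V := by ring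
  have hmvt := mvt' hconv hderiv (φ := G' y) hbound hyS hxS
  have habsG'y : ‖(G' y)‖ = s * t * V := by
    have e : G' y = (-(s : ℂ)) * (u y) ^ (-(s : ℂ) - 1) * ((t : ℝ) : ℂ) := rfl
    rw [e, norm_mul, norm_mul, habs_s, Complex.norm_real, Real.norm_eq_abs, abs_of_pos ht0]
    rw [hVdef]
    ring
  have htri : ‖((x - y) * G' y)‖
      ≤ ‖(G x - G y)‖ + ‖(G x - G y - (x - y) * G' y)‖ := by
    have := norm_sub_le (G x - G y) (G x - G y - (x - y) * G' y)
    simpa using this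
  rw [norm_mul, habsG'y] at htri
  have hVlow : ((N + B) * d) ^ (-(s + 1)) ≤ V := by
    have huy0 : u y ≠ 0 := hu0 y hyS
    have hVeq : V = ‖(u y)‖ ^ (-(s + 1)) := by
      rw [hVdef, hcast, abs_cpow_real' huy0]
    have hpos : 0 < ‖(u y)‖ :=
      lt_of_lt_of_le hNd (le_trans (hure y hyS) (Complex.re_le_norm _))
    rw [hVeq]
    exact Real.rpow_le_rpow_of_nonpos hpos (huabs y hyS) (by linarith)
  have hQpos : (0:ℝ) < ((N + B) * d) ^ (-(s + 1)) :=
    Real.rpow_pos_of_pos (mul_pos (by linarith) hd) _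
  have hVpos : 0 < V := lt_of_lt_of_le hQpos hVlow
  have hlow : s * t / 2 * V * ‖(x - y)‖ ≤ ‖(G x - G y)‖ := by
    have e : ‖(x - y)‖ * (s * t * V) - s * t / 2 * V * ‖(x - y)‖
        = s * t / 2 * V * ‖(x - y)‖ := by ring
    linarith [hmvt, htri]
  have hfin : s / 4 * ((N + B) * d) ^ (-(s + 1)) * ‖(x - y)‖
      ≤ s * t / 2 * V * ‖(x - y)‖ := by
    have h1 : s / 4 * ((N + B) * d) ^ (-(s + 1)) ≤ s / 4 * V :=
      mul_le_mul_of_nonneg_left hVlow (by linarith)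
    have h2 : s / 4 * V ≤ s * t / 2 * V := by
      have h0 : 0 ≤ s * (2 * t - 1) := mul_nonneg (by linarith) (by linarith)
      have h00 : s / 4 ≤ s * t / 2 := by nlinarith [h0]
      exact mul_le_mul_of_nonneg_right h00 hVpos.le
    exact mul_le_mul_of_nonneg_right (le_trans h1 h2) (norm_nonneg _)
  exact le_trans hfin hlow


lemma normSq_identity (b c : ℂ) :
    ‖(1 - (starRingEnd ℂ) b * c)‖ ^ 2
      = ‖(c - b)‖ ^ 2 + (1 - ‖b‖ ^ 2) * (1 - ‖c‖ ^ 2) := by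
  rw [Complex.sq_norm, Complex.sq_norm, Complex.sq_norm, Complex.sq_norm]
  simp only [Complex.normSq_apply, Complex.sub_re, Complex.sub_im, Complex.mul_re,
    Complex.mul_im, Complex.one_re, Complex.one_im, Complex.conj_re, Complex.conj_im]
  ring

lemma pd_le_one {z w : ℂ} (hz : ‖z‖ < 1) (hw : ‖w‖ < 1) : pd z w ≤ 1 := by
  have hid := normSq_identity w z
  have h1 : (0:ℝ) ≤ 1 - ‖w‖ ^ 2 := by nlinarith [norm_nonneg w]
  have h2 : (0:ℝ) ≤ 1 - ‖z‖ ^ 2 := by nlinarith [norm_nonneg z]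
  have hnum : ‖(z - w)‖ ≤ ‖(1 - (starRingEnd ℂ) w * z)‖ := by
    nlinarith [mul_nonneg h1 h2, norm_nonneg (z - w),
      norm_nonneg (1 - (starRingEnd ℂ) w * z)]
  have hden0 : (0:ℝ) ≤ ‖(1 - (starRingEnd ℂ) w * z)‖ := norm_nonneg _
  unfold pd
  rcases eq_or_lt_of_le hden0 with h | h
  · rw [← h, div_zero]; norm_num
  · rw [div_le_one h]; exact hnum


end Stmt13
open Stmt13
/-- Koo–Wang type reverse estimate for differences of reproducing-kernel powers. -/
theorem stmt_13 (s r₀ : ℝ) (hs : 1 < s) (h0 : 0 < r₀) (h1 : r₀ < 1) :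
    ∃ N : ℝ, 1 < N ∧ ∃ C > (0:ℝ),
      ∀ a ∈ uDisk, 1 - ‖a‖ < 1 / (2 * N) →
        ∀ z ∈ pDisk a r₀, ∀ w ∈ uDisk,
          C * pd z w * ‖(1 - (starRingEnd ℂ) a * z)‖ ^ (-s) ≤
            ‖((1 - (starRingEnd ℂ) a * z) ^ (-(s:ℂ)) -
                (1 - (starRingEnd ℂ) a * w) ^ (-(s:ℂ)))‖ +
            ‖
              ((1 - ((1 - N * (1 - ‖a‖) : ℝ) : ℂ) * ((starRingEnd ℂ) a * z)) ^ (-(s:ℂ)) -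
               (1 - ((1 - N * (1 - ‖a‖) : ℝ) : ℂ) * ((starRingEnd ℂ) a * w)) ^ (-(s:ℂ)))‖ := by
  have hr2 : (0:ℝ) < 1 - r₀ := by linarith
  set B : ℝ := 4 / (1 - r₀) with hBdef
  have hB : 4 ≤ B := by
    rw [hBdef, le_div_iff₀ hr2]; linarith
  set N : ℝ := 10 * (s + 1) * B with hNdef
  have hsB : (2:ℝ) * 4 ≤ (s + 1) * B :=
    mul_le_mul (by linarith) hB (by norm_num) (by linarith)
  have hN80 : 80 ≤ N := by rw [hNdef]; linarith
  have hN1 : 1 < N := by linarith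
  refine ⟨N, hN1, ?_⟩
  have hNBpos : (0:ℝ) < N + B := by linarith
  have hQpos : (0:ℝ) < (N + B) ^ (-(s+1)) := Real.rpow_pos_of_pos hNBpos _
  have hr0sq : (0:ℝ) < 1 - r₀ ^ 2 := by
    have hm := mul_lt_mul_of_pos_left h1 h0
    nlinarith [hm]
  set C : ℝ := min (1/2) ((1 - r₀^2) * s * (N + B) ^ (-(s+1)) / 32) with hCdef
  have hCpos : 0 < C := by
    apply lt_min (by norm_num)
    apply div_pos (mul_pos (mul_pos hr0sq (by linarith)) hQpos) (by norm_num)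
  clear_value B N C
  refine ⟨C, hCpos, ?_⟩
  intro a ha hdsmall z hz w hw
  obtain ⟨hzD, hza⟩ := hz
  have haD : ‖a‖ < 1 := ha
  have hzD' : ‖z‖ < 1 := hzD
  have hwD : ‖w‖ < 1 := hw
  set d : ℝ := 1 - ‖a‖ with hddef
  have hd0 : 0 < d := by rw [hddef]; linarith
  set x : ℂ := 1 - (starRingEnd ℂ) a * z with hxdef
  set y : ℂ := 1 - (starRingEnd ℂ) a * w with hydef
  have habsa : (0:ℝ) ≤ ‖a‖ := norm_nonneg _
  have hrex : d ≤ x.re := by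
    have h1 : ((starRingEnd ℂ) a * z).re ≤ ‖a‖ := by
      calc ((starRingEnd ℂ) a * z).re ≤ ‖((starRingEnd ℂ) a * z)‖ :=
            Complex.re_le_norm _
        _ = ‖a‖ * ‖z‖ := by rw [norm_mul, Complex.norm_conj]
        _ ≤ ‖a‖ * 1 := mul_le_mul_of_nonneg_left hzD'.le habsa
        _ = ‖a‖ := mul_one _
    have h2 : x.re = 1 - ((starRingEnd ℂ) a * z).re := by
      rw [hxdef, Complex.sub_re, Complex.one_re]
    rw [h2, hddef]; linarith
  have hrey : d ≤ y.re := by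
    have h1 : ((starRingEnd ℂ) a * w).re ≤ ‖a‖ := by
      calc ((starRingEnd ℂ) a * w).re ≤ ‖((starRingEnd ℂ) a * w)‖ :=
            Complex.re_le_norm _
        _ = ‖a‖ * ‖w‖ := by rw [norm_mul, Complex.norm_conj]
        _ ≤ ‖a‖ * 1 := mul_le_mul_of_nonneg_left hwD.le habsa
        _ = ‖a‖ := mul_one _
    have h2 : y.re = 1 - ((starRingEnd ℂ) a * w).re := by
      rw [hydef, Complex.sub_re, Complex.one_re]
    rw [h2, hddef]; linarith
  have hx0 : x ≠ 0 := by
    intro h; rw [h] at hrex; simp only [Complex.zero_re] at hrex; linarith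
  have hy0 : y ≠ 0 := by
    intro h; rw [h] at hrey; simp only [Complex.zero_re] at hrey; linarith
  have hdle : d ≤ ‖x‖ := le_trans hrex (Complex.re_le_norm x)
  have hdley : d ≤ ‖y‖ := le_trans hrey (Complex.re_le_norm y)
  have haxpos : 0 < ‖x‖ := lt_of_lt_of_le hd0 hdle
  have hza' : ‖(z - a)‖ / ‖x‖ < r₀ := hza
  have habszax : ‖(z - a)‖ ≤ r₀ * ‖x‖ := by
    rw [div_lt_iff₀ haxpos] at hza'
    linarith [hza']
  clear_value d x y
  have hconjmul : (starRingEnd ℂ) a * a = ((‖a‖ ^ 2 : ℝ) : ℂ) := by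
    rw [mul_comm, Complex.mul_conj, Complex.normSq_eq_norm_sq]
  have ha2 : 1 - ‖a‖ ^ 2 ≤ 2 * d := by
    rw [hddef]; linarith [sq_nonneg (1 - ‖a‖)]
  have ha2nn : (0:ℝ) ≤ 1 - ‖a‖ ^ 2 := by
    have hm := mul_le_mul haD.le haD.le habsa (by norm_num : (0:ℝ) ≤ 1)
    linarith [hm]
  have hxeq : x = ((1 - ‖a‖ ^ 2 : ℝ) : ℂ) + (starRingEnd ℂ) a * (a - z) := by
    have e : ((1 - ‖a‖ ^ 2 : ℝ) : ℂ) = 1 - (starRingEnd ℂ) a * a := by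
      rw [hconjmul]; norm_cast
    rw [hxdef, e]; ring
  have hxb1 : ‖x‖ ≤ (1 - ‖a‖ ^ 2) + r₀ * ‖x‖ := by
    have e1 : ‖x‖
        ≤ ‖((1 - ‖a‖ ^ 2 : ℝ) : ℂ)‖
          + ‖((starRingEnd ℂ) a * (a - z))‖ := by
      calc ‖x‖
          = ‖(((1 - ‖a‖ ^ 2 : ℝ) : ℂ) + (starRingEnd ℂ) a * (a - z))‖ := by
            rw [← hxeq]
        _ ≤ _ := norm_add_le _ _
    have e2 : ‖((1 - ‖a‖ ^ 2 : ℝ) : ℂ)‖ = 1 - ‖a‖ ^ 2 := by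
      rw [Complex.norm_real, Real.norm_eq_abs, _root_.abs_of_nonneg ha2nn]
    have e3 : ‖((starRingEnd ℂ) a * (a - z))‖ ≤ r₀ * ‖x‖ := by
      rw [norm_mul, Complex.norm_conj]
      have e4 : ‖(a - z)‖ = ‖(z - a)‖ := by
        rw [norm_sub_rev]
      calc ‖a‖ * ‖(a - z)‖ ≤ 1 * ‖(a - z)‖ :=
            mul_le_mul_of_nonneg_right haD.le (norm_nonneg _)
        _ = ‖(z - a)‖ := by rw [one_mul, e4]
        _ ≤ r₀ * ‖x‖ := habszax
    linarith [e1, e2 ▸ e1, e3]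
  have hxB : ‖x‖ ≤ B / 2 * d := by
    have h9 : (1 - r₀) * ‖x‖ ≤ 2 * d := by linarith [hxb1, ha2]
    have e : B / 2 * d = 2 * d / (1 - r₀) := by
      rw [hBdef]; field_simp; ring
    rw [e, le_div_iff₀ hr2]; linarith [h9]
  set tt : ℝ := 1 - N * d with htdef
  clear_value tt
  have hNdhalf : N * d < 1 / 2 := by
    have h : d < 1 / (2 * N) := hdsmall
    have e : N * (1 / (2 * N)) = 1 / 2 := by
      rw [mul_one_div, div_eq_div_iff (by linarith) (by norm_num)]
      ring
    calc N * d < N * (1 / (2 * N)) := by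
          apply mul_lt_mul_of_pos_left h (by linarith)
      _ = 1 / 2 := e
  have htt2 : 1 / 2 ≤ tt := by rw [htdef]; linarith
  have htt1 : tt ≤ 1 := by
    rw [htdef]
    linarith [mul_pos (show (0:ℝ) < N by linarith) hd0]
  have hker1 : (1 : ℂ) - ((tt : ℝ) : ℂ) * ((starRingEnd ℂ) a * z)
      = ((N * d : ℝ) : ℂ) + ((tt : ℝ) : ℂ) * x := by
    rw [hxdef, htdef]; push_cast; ring
  have hker2 : (1 : ℂ) - ((tt : ℝ) : ℂ) * ((starRingEnd ℂ) a * w)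
      = ((N * d : ℝ) : ℂ) + ((tt : ℝ) : ℂ) * y := by
    rw [hydef, htdef]; push_cast; ring
  rw [hker1, hker2]
  have hpdnn : 0 ≤ pd z w :=
    div_nonneg (norm_nonneg _) (norm_nonneg _)
  by_cases hcase : 2 * ‖x‖ ≤ ‖y‖
  · -- Case 1
    have hterm1 := case1 s hs hx0 hy0 hcase
    have hpd1 : pd z w ≤ 1 := pd_le_one hzD' hwD
    have hC12 : C ≤ 1 / 2 := by rw [hCdef]; exact min_le_left _ _
    have hrp : 0 < ‖x‖ ^ (-s) := Real.rpow_pos_of_pos haxpos _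
    have hterm2nn : 0 ≤ ‖((((N * d : ℝ) : ℂ) + ((tt : ℝ) : ℂ) * x) ^ (-(s:ℂ)) -
          (((N * d : ℝ) : ℂ) + ((tt : ℝ) : ℂ) * y) ^ (-(s:ℂ)))‖ := norm_nonneg _
    have hfin : C * pd z w * ‖x‖ ^ (-s) ≤ 1 / 2 * ‖x‖ ^ (-s) := by
      have := mul_le_mul_of_nonneg_right
        (mul_le_mul hC12 hpd1 hpdnn (by norm_num : (0:ℝ) ≤ 1/2)) hrp.le
      calc C * pd z w * ‖x‖ ^ (-s) = C * pd z w * ‖x‖ ^ (-s) := rfl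
        _ ≤ 1 / 2 * 1 * ‖x‖ ^ (-s) := this
        _ = 1 / 2 * ‖x‖ ^ (-s) := by ring
    linarith [hterm1, hterm2nn, hfin]
  · -- Case 2
    push_neg at hcase
    have hBd : (0:ℝ) ≤ B * d := by positivity
    have hyB : ‖y‖ ≤ B * d := by linarith [hxB, hcase]
    have hxB' : ‖x‖ ≤ B * d := by linarith [hxB, hBd]
    have hkey := key s B d tt N hs hB hNdef hd0 htt2 htt1 x y hrex hrey hxB' hyB
    have hid := normSq_identity a z
    rw [← hxdef] at hid
    have hz2nn : (0:ℝ) ≤ 1 - ‖z‖ ^ 2 := by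
      have hm := mul_le_mul hzD'.le hzD'.le (norm_nonneg _) (by norm_num : (0:ℝ) ≤ 1)
      linarith [hm]
    have h1z : (1 - r₀^2) * d ≤ 2 * (1 - ‖z‖ ^ 2) := by
      have e1 : (1 - r₀^2) * (‖x‖)^2
          ≤ (1 - ‖a‖ ^ 2) * (1 - ‖z‖ ^ 2) := by
        have hz2 : ‖(z - a)‖ * ‖(z - a)‖
            ≤ (r₀ * ‖x‖) * (r₀ * ‖x‖) :=
          mul_le_mul habszax habszax (norm_nonneg _)
            (mul_nonneg h0.le (norm_nonneg _))
        linarith [hid, hz2]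
      have e2 : (1 - r₀^2) * d^2 ≤ (1 - r₀^2) * (‖x‖)^2 := by
        apply mul_le_mul_of_nonneg_left _ hr0sq.le
        have hm := mul_le_mul hdle hdle hd0.le (norm_nonneg _)
        linarith [hm]
      have e3 : (1 - ‖a‖ ^ 2) * (1 - ‖z‖ ^ 2)
          ≤ 2 * d * (1 - ‖z‖ ^ 2) :=
        mul_le_mul_of_nonneg_right ha2 hz2nn
      have e4 : d * ((1 - r₀^2) * d) ≤ d * (2 * (1 - ‖z‖ ^ 2)) := by
        linarith [e1, e2, e3]
      exact le_of_mul_le_mul_left e4 hd0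
    have hdenom : (1 - r₀^2) * d / 4 ≤ ‖(1 - (starRingEnd ℂ) w * z)‖ := by
      have h6 : ‖((starRingEnd ℂ) w * z)‖ ≤ ‖z‖ := by
        rw [norm_mul, Complex.norm_conj]
        have hm := mul_le_mul_of_nonneg_right hwD.le (norm_nonneg z)
        linarith [hm]
      have e5 : 1 - ‖z‖ ≤ ‖(1 - (starRingEnd ℂ) w * z)‖ := by
        have h8 := norm_sub_norm_le (1:ℂ) ((starRingEnd ℂ) w * z)
        simp only [norm_one] at h8
        linarith [h8, h6]
      have e6 : (1 - r₀^2) * d / 4 ≤ 1 - ‖z‖ := by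
        linarith [h1z, sq_nonneg (1 - ‖z‖)]
      linarith
    have ha12 : (1:ℝ)/2 ≤ ‖a‖ := by
      have h : 1 / (2 * N) ≤ 1 / 2 := by
        rw [div_le_div_iff₀ (by linarith) (by norm_num)]; linarith
      have : d < 1 / 2 := lt_of_lt_of_le hdsmall h
      rw [hddef] at this; linarith
    have hxy_zw : ‖(z - w)‖ ≤ 2 * ‖(x - y)‖ := by
      have e7 : x - y = (starRingEnd ℂ) a * (w - z) := by rw [hxdef, hydef]; ring
      have e8 : ‖(x - y)‖ = ‖a‖ * ‖(z - w)‖ := by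
        rw [e7, norm_mul, Complex.norm_conj]
        congr 1
        rw [norm_sub_rev]
      have hm := mul_le_mul_of_nonneg_right ha12 (norm_nonneg (z - w))
      linarith [e8, hm]
    have hpdle : pd z w ≤ 8 * ‖(x - y)‖ / ((1 - r₀^2) * d) := by
      have hq0 : (0:ℝ) < (1 - r₀^2) * d := mul_pos hr0sq hd0
      have hden0 : (0:ℝ) < (1 - r₀^2) * d / 4 := by linarith
      have hden : 0 < ‖(1 - (starRingEnd ℂ) w * z)‖ :=
        lt_of_lt_of_le hden0 hdenom
      show ‖(z - w)‖ / ‖(1 - (starRingEnd ℂ) w * z)‖ ≤ _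
      rw [div_le_div_iff₀ hden hq0]
      have hExy : (0:ℝ) ≤ ‖(x - y)‖ := norm_nonneg _
      have m1 : ‖(z - w)‖ * ((1 - r₀^2) * d)
          ≤ (2 * ‖(x - y)‖) * ((1 - r₀^2) * d) :=
        mul_le_mul_of_nonneg_right hxy_zw hq0.le
      have m2 : 8 * ‖(x - y)‖ * ((1 - r₀^2) * d / 4)
          ≤ 8 * ‖(x - y)‖ * ‖(1 - (starRingEnd ℂ) w * z)‖ :=
        mul_le_mul_of_nonneg_left hdenom (by linarith)
      have m3 : (2 * ‖(x - y)‖) * ((1 - r₀^2) * d)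
          = 8 * ‖(x - y)‖ * ((1 - r₀^2) * d / 4) := by ring
      linarith [m1, m2, m3]
    have hdx : ‖x‖ ^ (-s) ≤ d ^ (-s) :=
      Real.rpow_le_rpow_of_nonpos hd0 hdle (by linarith)
    have hds : 0 < d ^ (-s) := Real.rpow_pos_of_pos hd0 _
    have hsplit : ((N + B) * d) ^ (-(s+1)) = (N + B) ^ (-(s+1)) * d ^ (-(s+1)) :=
      Real.mul_rpow hNBpos.le hd0.le
    have hdsub : d ^ (-(s+1)) = d ^ (-s) / d := by
      rw [show -(s+1) = -s - 1 by ring, Real.rpow_sub hd0, Real.rpow_one]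
    have hCle : C ≤ (1 - r₀^2) * s * (N + B) ^ (-(s+1)) / 32 := by
      rw [hCdef]; exact min_le_right _ _
    have hE : (0:ℝ) ≤ ‖(x - y)‖ := norm_nonneg _
    have hT1 : 0 ≤ ‖(x ^ (-(s:ℂ)) - y ^ (-(s:ℂ)))‖ := norm_nonneg _
    have hbnd0 : (0:ℝ) ≤ 8 * ‖(x - y)‖ / ((1 - r₀^2) * d) :=
      div_nonneg (by linarith) (le_of_lt (mul_pos hr0sq hd0))
    have step1 : C * pd z w * ‖x‖ ^ (-s)
        ≤ C * (8 * ‖(x - y)‖ / ((1 - r₀^2) * d)) * (d ^ (-s)) := by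
      have l1 : C * pd z w ≤ C * (8 * ‖(x - y)‖ / ((1 - r₀^2) * d)) :=
        mul_le_mul_of_nonneg_left hpdle hCpos.le
      have l2 : (0:ℝ) ≤ C * pd z w := mul_nonneg hCpos.le hpdnn
      exact mul_le_mul l1 hdx (Real.rpow_nonneg (norm_nonneg _) _) (le_trans l2 l1)
    have step2 : C * (8 * ‖(x - y)‖ / ((1 - r₀^2) * d)) * (d ^ (-s))
        ≤ ((1 - r₀^2) * s * (N + B) ^ (-(s+1)) / 32)
          * (8 * ‖(x - y)‖ / ((1 - r₀^2) * d)) * (d ^ (-s)) := by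
      apply mul_le_mul_of_nonneg_right _ hds.le
      exact mul_le_mul_of_nonneg_right hCle hbnd0
    have step3 : ((1 - r₀^2) * s * (N + B) ^ (-(s+1)) / 32)
          * (8 * ‖(x - y)‖ / ((1 - r₀^2) * d)) * (d ^ (-s))
        = s / 4 * ((N + B) * d) ^ (-(s+1)) * ‖(x - y)‖ := by
      rw [hsplit, hdsub]
      field_simp
      ring
    have main2 : C * pd z w * ‖x‖ ^ (-s)
        ≤ s / 4 * ((N + B) * d) ^ (-(s+1)) * ‖(x - y)‖ := by
      calc C * pd z w * ‖x‖ ^ (-s)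
          ≤ C * (8 * ‖(x - y)‖ / ((1 - r₀^2) * d)) * (d ^ (-s)) := step1
        _ ≤ ((1 - r₀^2) * s * (N + B) ^ (-(s+1)) / 32)
            * (8 * ‖(x - y)‖ / ((1 - r₀^2) * d)) * (d ^ (-s)) := step2
        _ = s / 4 * ((N + B) * d) ^ (-(s+1)) * ‖(x - y)‖ := step3
    linarith [main2, hkey, hT1]
end
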